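/- Let W ⊆ ℝ^d be a nonempty convex set with diameter at most D (D > 0), let n ≥ 1, let f₁, …, fₙ : ℝ^d → ℝ be convex differentiable functions with ‖∇f_i(w)‖ ≤ L₀ for all w ∈ W and all i, and set F = (1/n)∑_{i=1}^n f_i. Fix L₁ > 0, t ≥ 0, w₀ ∈ W, and step sizes η_k = D/(L₁√(k+1)). For each index sequence σ ∈ {1,…,n}^t define SGD iterates w₀^σ = w₀ and, for 0 ≤ k < t, let w_{k+1}^σ ∈ W satisfy ⟨w_k^σ − η_k ∇f_{σ_k}(w_k^σ) − w_{k+1}^σ, u − w_{k+1}^σ⟩ ≤ 0 for all u ∈ W, where w_{k+1}^σ depends only on σ₀, …, σ_k. Then for every j with 0 ≤ j ≤ t, the uniform average over all n^t index sequences satisfies (1/n^t) ∑_σ ∑_{k=j}^{t} ( F(w_k^σ) − F(w_j^σ) ) ≤ D(L₁² + 2L₀²)(√(t+1) − √j) / (2L₁). -/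

import Mathlib

open scoped RealInnerProductSpace


lemma subgrad {E : Type*} [NormedAddCommGroup E] [InnerProductSpace ℝ E] [CompleteSpace E]
    {f : E → ℝ} (hc : ConvexOn ℝ Set.univ f) {x gx : E} (hg : HasGradientAt f gx x) (y : E) :
    f x + ⟪gx, y - x⟫ ≤ f y := by
  rcases eq_or_ne y x with rfl | hne
  · simp
  · set c : ℝ → E := fun s => x + s • (y - x) with hcdef
    have hc0 : c 0 = x := by simp [hcdef]
    have hc1 : c 1 = y := by simp [hcdef]
    have hder : HasDerivAt (fun s => f (c s)) ⟪gx, y - x⟫ 0 := by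
      have hcd : HasDerivAt c (y - x) 0 := by
        simpa [hcdef] using ((hasDerivAt_id (0:ℝ)).smul_const (y - x)).const_add x
      have hfd : HasFDerivAt f (InnerProductSpace.toDual ℝ E gx) (c 0) := by
        rw [hc0]; exact hg
      simpa [InnerProductSpace.toDual_apply_apply, Function.comp_def] using hfd.comp_hasDerivAt 0 hcd
    have hconv : ConvexOn ℝ Set.univ (fun s : ℝ => f (c s)) := by
      have haff : ConvexOn ℝ ((AffineMap.lineMap x y : ℝ →ᵃ[ℝ] E) ⁻¹' Set.univ)
          (f ∘ (AffineMap.lineMap x y : ℝ →ᵃ[ℝ] E)) := hc.comp_affineMap _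
      rw [Set.preimage_univ] at haff
      have heq : (fun s : ℝ => f (c s)) = f ∘ (AffineMap.lineMap x y : ℝ →ᵃ[ℝ] E) := by
        funext s
        simp only [Function.comp_apply, AffineMap.lineMap_apply_module, hcdef]
        congr 1; module
      rw [heq]; exact haff
    have := hconv.le_slope_of_hasDerivAt (Set.mem_univ (0:ℝ)) (Set.mem_univ (1:ℝ))
      one_pos hder
    rw [slope_def_field] at this
    simp only [hc0, hc1] at this
    have h1 : (f y - f x) / (1 - 0) = f y - f x := by norm_num
    rw [h1] at this
    linarith

lemma exchange {n t : ℕ} (hn : 1 ≤ n) {E : Type*} (f : Fin n → E → ℝ) (κ : Fin t)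
    (v : (Fin t → Fin n) → E)
    (hv : ∀ σ σ' : Fin t → Fin n, (∀ i : Fin t, i ≠ κ → σ i = σ' i) → v σ = v σ') :
    ∑ σ : Fin t → Fin n, f (σ κ) (v σ)
      = (n : ℝ)⁻¹ * ∑ σ : Fin t → Fin n, ∑ i : Fin n, f i (v σ) := by
  haveI : NeZero n := ⟨by omega⟩
  set e := Equiv.funSplitAt κ (Fin n) with he
  have hκ : ∀ (x : Fin n) (τ : {i : Fin t // i ≠ κ} → Fin n), (e.symm (x, τ)) κ = x := by
    intro x τ
    simp [he, Equiv.funSplitAt, Equiv.piSplitAt]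
  have hval : ∀ (x x' : Fin n) τ, v (e.symm (x, τ)) = v (e.symm (x', τ)) := by
    intro x x' τ
    apply hv
    intro i hi
    simp [he, Equiv.funSplitAt, Equiv.piSplitAt, dif_neg hi]
  have lhs : ∑ σ : Fin t → Fin n, f (σ κ) (v σ)
      = ∑ τ : {i : Fin t // i ≠ κ} → Fin n, ∑ x : Fin n, f x (v (e.symm (0, τ))) := by
    rw [← Equiv.sum_comp e.symm (fun σ => f (σ κ) (v σ)), Fintype.sum_prod_type,
      Finset.sum_comm]
    refine Finset.sum_congr rfl fun τ _ => Finset.sum_congr rfl fun x _ => ?_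
    rw [hκ, hval x 0 τ]
  have rhs : ∑ σ : Fin t → Fin n, ∑ i : Fin n, f i (v σ)
      = ∑ τ : {i : Fin t // i ≠ κ} → Fin n, (n : ℝ) * ∑ i : Fin n, f i (v (e.symm (0, τ))) := by
    rw [← Equiv.sum_comp e.symm (fun σ => ∑ i : Fin n, f i (v σ)), Fintype.sum_prod_type,
      Finset.sum_comm]
    refine Finset.sum_congr rfl fun τ _ => ?_
    rw [Finset.sum_congr rfl fun x _ => by rw [hval x 0 τ]]
    rw [Finset.sum_const, Finset.card_univ, Fintype.card_fin, nsmul_eq_mul]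
  rw [lhs, rhs, Finset.mul_sum]
  refine Finset.sum_congr rfl fun τ _ => ?_
  rw [← mul_assoc, inv_mul_cancel₀ (Nat.cast_ne_zero.mpr (by omega)), one_mul]

lemma sqrt_aux1 (m : ℕ) : (Real.sqrt (m+1))⁻¹ ≤ 2*(Real.sqrt (m+1) - Real.sqrt m) := by
  set a := Real.sqrt m with hadef
  set b := Real.sqrt (m+1) with hbdef
  have ha2 : a^2 = m := Real.sq_sqrt (by positivity)
  have hb2 : b^2 = (m:ℝ)+1 := Real.sq_sqrt (by positivity)
  have ha0 : 0 ≤ a := Real.sqrt_nonneg _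
  have hb : 0 < b := Real.sqrt_pos.mpr (by positivity)
  have hab : a ≤ b := Real.sqrt_le_sqrt (by linarith)
  rw [inv_eq_one_div, div_le_iff₀ hb]
  nlinarith [mul_nonneg (sub_nonneg.mpr hab) (by linarith : (0:ℝ) ≤ 2*b - (a+b))]

lemma sqrt_aux2 (s : ℕ) : (Real.sqrt (s+1))⁻¹ ≤ Real.sqrt (s+2) - Real.sqrt s := by
  set a := Real.sqrt s with hadef
  set b := Real.sqrt (s+1) with hbdef
  set c := Real.sqrt (s+2) with hcdef
  have ha2 : a^2 = s := Real.sq_sqrt (by positivity)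
  have hb2 : b^2 = (s:ℝ)+1 := Real.sq_sqrt (by positivity)
  have hc2 : c^2 = (s:ℝ)+2 := Real.sq_sqrt (by positivity)
  have ha0 : 0 ≤ a := Real.sqrt_nonneg _
  have hc0 : 0 ≤ c := Real.sqrt_nonneg _
  have hb : 0 < b := Real.sqrt_pos.mpr (by positivity)
  have hac : a*c ≤ (s:ℝ)+1 := by
    have h1 : a*c = Real.sqrt ((s:ℝ)*((s:ℝ)+2)) := (Real.sqrt_mul (by positivity) _).symm
    rw [h1]
    calc Real.sqrt ((s:ℝ)*((s:ℝ)+2)) ≤ Real.sqrt (((s:ℝ)+1)^2) :=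
          Real.sqrt_le_sqrt (by nlinarith)
      _ = (s:ℝ)+1 := Real.sqrt_sq (by positivity)
  have hca : a ≤ c := Real.sqrt_le_sqrt (by linarith)
  have hsum : c + a ≤ 2*b := by
    have h1 : (c+a)^2 ≤ (2*b)^2 := by nlinarith
    have h2 : c + a = Real.sqrt ((c+a)^2) := (Real.sqrt_sq (by linarith)).symm
    rw [h2, ← Real.sqrt_sq (by linarith : (0:ℝ) ≤ 2*b)]
    exact Real.sqrt_le_sqrt h1
  rw [inv_eq_one_div, div_le_iff₀ hb]
  nlinarith [mul_nonneg (sub_nonneg.mpr hca) (by linarith : (0:ℝ) ≤ 2*b - (c+a))]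

lemma sum_inv_sqrt (j : ℕ) : ∀ m, j ≤ m →
    ∑ k ∈ Finset.Ico j m, (Real.sqrt (k+1))⁻¹ ≤ 2*(Real.sqrt m - Real.sqrt j) := by
  intro m hm
  induction m, hm using Nat.le_induction with
  | base => simp
  | succ m hm ih =>
    rw [Finset.sum_Ico_succ_top hm]
    have h1 := sqrt_aux1 m
    have hc : ((m+1:ℕ):ℝ) = (m:ℝ)+1 := by push_cast; ring
    push_cast
    linarith

set_option maxHeartbeats 2000000 in
/-- Suffix-sum bound for projected SGD (in expectation over the uniformly random index
sequences): the average over index sequences of `∑_{k=j}^{t} (F(w_k) − F(w_j))` is at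
most `D (L₁² + 2L₀²)(√(t+1) − √j) / (2 L₁)`. -/
theorem sgd_suffix_sum_bound
    {d : ℕ} {n : ℕ} (hn : 1 ≤ n)
    (W : Set (EuclideanSpace ℝ (Fin d))) (hW : Convex ℝ W) (hWne : W.Nonempty)
    (D : ℝ) (hD : 0 < D) (hdiam : ∀ w ∈ W, ∀ v ∈ W, ‖w - v‖ ≤ D)
    (f : Fin n → EuclideanSpace ℝ (Fin d) → ℝ)
    (g : Fin n → EuclideanSpace ℝ (Fin d) → EuclideanSpace ℝ (Fin d))
    (hconv : ∀ i, ConvexOn ℝ Set.univ (f i))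
    (hgrad : ∀ i x, HasGradientAt (f i) (g i x) x)
    (L₀ : ℝ) (hL₀ : ∀ i, ∀ x ∈ W, ‖g i x‖ ≤ L₀)
    (F : EuclideanSpace ℝ (Fin d) → ℝ)
    (hF : F = fun w => (n : ℝ)⁻¹ * ∑ i : Fin n, f i w)
    (L₁ : ℝ) (hL₁ : 0 < L₁) (t : ℕ)
    (w₀ : EuclideanSpace ℝ (Fin d)) (hw₀ : w₀ ∈ W)
    (η : ℕ → ℝ) (hη : ∀ k : ℕ, η k = D / (L₁ * Real.sqrt (k + 1)))
    (w : (Fin t → Fin n) → ℕ → EuclideanSpace ℝ (Fin d))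
    (hw0 : ∀ σ, w σ 0 = w₀)
    (hmem : ∀ σ k, k < t → w σ (k + 1) ∈ W)
    (hproj : ∀ (σ : Fin t → Fin n) (k : ℕ) (hk : k < t), ∀ u ∈ W,
      ⟪w σ k - η k • g (σ ⟨k, hk⟩) (w σ k) - w σ (k + 1), u - w σ (k + 1)⟫ ≤ 0)
    (hdep : ∀ (σ σ' : Fin t → Fin n) (k : ℕ), k < t →
      (∀ j : Fin t, (j : ℕ) ≤ k → σ j = σ' j) → w σ (k + 1) = w σ' (k + 1)) :
    ∀ j : ℕ, j ≤ t →
      ((n : ℝ) ^ t)⁻¹ *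
          ∑ σ : Fin t → Fin n, ∑ k ∈ Finset.Icc j t, (F (w σ k) - F (w σ j)) ≤
        D * (L₁ ^ 2 + 2 * L₀ ^ 2) * (Real.sqrt (t + 1) - Real.sqrt j) / (2 * L₁) := by
  intro j hj
  have hL0 : 0 ≤ L₀ := le_trans (norm_nonneg _) (hL₀ ⟨0, by omega⟩ w₀ hw₀)
  rcases eq_or_lt_of_le hj with rfl | hjt
  · -- case j = t : LHS is zero
    simp only [Finset.Icc_self, Finset.sum_singleton, sub_self, Finset.sum_const_zero, mul_zero]
    have hs : Real.sqrt j ≤ Real.sqrt (j + 1) := Real.sqrt_le_sqrt (by linarith)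
    have : 0 ≤ D * (L₁ ^ 2 + 2 * L₀ ^ 2) * (Real.sqrt (j + 1) - Real.sqrt j) := by
      apply mul_nonneg (mul_nonneg hD.le (by positivity)) (by linarith)
    positivity
  -- main case j < t
  obtain ⟨m, rfl⟩ : ∃ m, t = m + 1 := ⟨t - 1, by omega⟩
  have hjm : j ≤ m := by omega
  -- basic facts
  set c : ℕ → ℝ := fun k => L₁ * Real.sqrt (k + 1) with hcdef
  have hcpos : ∀ k : ℕ, 0 < c k :=
    fun k => mul_pos hL₁ (Real.sqrt_pos.mpr (by positivity))
  have hcmono : ∀ k l : ℕ, k ≤ l → c k ≤ c l := by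
    intro k l h
    exact mul_le_mul_of_nonneg_left
      (Real.sqrt_le_sqrt (by push_cast; exact_mod_cast by omega)) hL₁.le
  have hηc : ∀ k, η k = D / c k := fun k => hη k
  have hηpos : ∀ k : ℕ, 0 < η k := fun k => by rw [hηc]; positivity
  have hηck : ∀ k : ℕ, η k * c k = D := by
    intro k; rw [hηc]; field_simp [(hcpos k).ne']
  have hmemW : ∀ σ M, M ≤ m + 1 → w σ M ∈ W := by
    intro σ M hM
    cases M with
    | zero => rw [hw0]; exact hw₀
    | succ k => exact hmem σ k (by omega)
  have hdep' : ∀ (σ σ' : Fin (m+1) → Fin n) (M : ℕ), M ≤ m + 1 →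
      (∀ i : Fin (m+1), (i : ℕ) < M → σ i = σ' i) → w σ M = w σ' M := by
    intro σ σ' M hM hag
    cases M with
    | zero => rw [hw0, hw0]
    | succ k => exact hdep σ σ' k (by omega) (fun i hi => hag i (by omega))
  have hdiamle : ∀ σ M, M ≤ m + 1 → ‖w σ M - w σ j‖ ≤ D := by
    intro σ M hM
    exact hdiam _ (hmemW σ M hM) _ (hmemW σ j (by omega))
  -- the random quantity
  set Φ : (Fin (m+1) → Fin n) → ℕ → ℝ := fun σ k =>
    if h : k < m + 1 then f (σ ⟨k, h⟩) (w σ k) - f (σ ⟨k, h⟩) (w σ j) else 0 with hΦdef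
  -- per-step inequality
  have step : ∀ (σ : Fin (m+1) → Fin n) (k : ℕ) (hk : k < m + 1),
      2*D*(f (σ ⟨k, hk⟩) (w σ k) - f (σ ⟨k, hk⟩) (w σ j))
        ≤ (‖w σ k - w σ j‖^2 - ‖w σ (k+1) - w σ j‖^2) * c k + L₀^2 * D * η k := by
    intro σ k hk
    set i := σ ⟨k, hk⟩ with hidef
    set x := w σ k with hx
    set p := w σ (k+1) with hp
    set u := w σ j with hu
    set G := g i x with hG
    have hxW : x ∈ W := hmemW σ k (by omega)
    have huW : u ∈ W := hmemW σ j (by omega)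
    have h1 : ⟪x - η k • G - p, u - p⟫ ≤ 0 := hproj σ k hk u huW
    have h1' : (0:ℝ) ≤ ⟪x - η k • G - p, p - u⟫ := by
      rw [show p - u = -(u - p) by abel, inner_neg_right]; linarith
    have hexp : ‖x - η k • G - u‖^2
        = ‖x - η k • G - p‖^2 + 2*⟪x - η k • G - p, p - u⟫ + ‖p - u‖^2 := by
      rw [show x - η k • G - u = (x - η k • G - p) + (p - u) by abel]
      exact norm_add_sq_real _ _
    have h2 : ‖p - u‖^2 ≤ ‖x - η k • G - u‖^2 := by
      nlinarith [sq_nonneg ‖x - η k • G - p‖]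
    have h3 : ‖x - η k • G - u‖^2
        = ‖x - u‖^2 - 2*(η k)*⟪G, x - u⟫ + (η k)^2*‖G‖^2 := by
      rw [show x - η k • G - u = (x - u) - η k • G by abel, norm_sub_sq_real,
        real_inner_smul_right, norm_smul, real_inner_comm]
      rw [Real.norm_eq_abs, abs_of_pos (hηpos k)]
      ring
    have h4 : f i x + ⟪G, u - x⟫ ≤ f i u := subgrad (hconv i) (hgrad i x) u
    have h4' : f i x - f i u ≤ ⟪G, x - u⟫ := by
      have hh : ⟪G, u - x⟫ = -⟪G, x - u⟫ := by
        rw [show u - x = -(x - u) by abel, inner_neg_right]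
      rw [hh] at h4; linarith
    have h5 : ‖G‖^2 ≤ L₀^2 := by
      have := hL₀ i x hxW
      nlinarith [norm_nonneg G]
    have hkey : ‖p - u‖^2 ≤ ‖x - u‖^2 - 2*(η k)*(f i x - f i u) + (η k)^2 * L₀^2 := by
      have hA := mul_le_mul_of_nonneg_left h4' (le_of_lt (hηpos k))
      have hB := mul_le_mul_of_nonneg_left h5 (sq_nonneg (η k))
      linarith [h2, h3, hA, hB]
    have hck := hcpos k
    have hkey2 := mul_le_mul_of_nonneg_right hkey hck.le
    have e1 : 2*(η k)*(f i x - f i u)*c k = 2*D*(f i x - f i u) := by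
      rw [show 2*(η k)*(f i x - f i u)*c k = 2*(f i x - f i u)*(η k * c k) by ring, hηck]
      ring
    have e2 : (η k)^2*L₀^2*c k = L₀^2*D*(η k) := by
      rw [show (η k)^2*L₀^2*c k = L₀^2*(η k)*(η k * c k) by ring, hηck]
      ring
    nlinarith [hkey2, e1, e2]
  -- inductive suffix bound
  have Qind : ∀ (σ : Fin (m+1) → Fin n) (M : ℕ) (hM : j ≤ M), M < m + 1 →
      2*D*(∑ k ∈ Finset.Ico j (M+1), Φ σ k) + ‖w σ (M+1) - w σ j‖^2 * c M
        ≤ D^2*(c M - c j) + L₀^2*D*(∑ k ∈ Finset.Ico j (M+1), η k) := by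
    intro σ M hM
    induction M, hM using Nat.le_induction with
    | base =>
      intro hlt
      rw [Finset.sum_Ico_succ_top le_rfl, Finset.sum_Ico_succ_top le_rfl,
        Finset.Ico_self, Finset.sum_empty, Finset.sum_empty]
      have hΦj : Φ σ j = f (σ ⟨j, hlt⟩) (w σ j) - f (σ ⟨j, hlt⟩) (w σ j) := by
        rw [hΦdef]; simp only [dif_pos hlt]
      have hstep := step σ j hlt
      have haj : ‖w σ j - w σ j‖ = 0 := by simp
      rw [hΦj]
      rw [haj] at hstep
      nlinarith [hstep]
    | succ M hM ih =>
      intro hlt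
      have hMlt : M < m + 1 := by omega
      have ihh := ih hMlt
      rw [Finset.sum_Ico_succ_top (by omega : j ≤ M + 1),
        Finset.sum_Ico_succ_top (by omega : j ≤ M + 1)]
      have hstep := step σ (M+1) hlt
      have hΦM : Φ σ (M+1) = f (σ ⟨M+1, hlt⟩) (w σ (M+1)) - f (σ ⟨M+1, hlt⟩) (w σ j) := by
        rw [hΦdef]; simp only [dif_pos hlt]
      rw [hΦM]
      have hbound : ‖w σ (M+1) - w σ j‖^2 ≤ D^2 := by
        have h := hdiamle σ (M+1) (by omega)
        nlinarith [norm_nonneg (w σ (M+1) - w σ j)]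
      have hmono := hcmono M (M+1) (by omega)
      nlinarith [mul_nonneg (sub_nonneg.mpr hbound) (sub_nonneg.mpr hmono)]
  -- bound on the final term
  have tstep : ∀ σ : Fin (m+1) → Fin n,
      2*D*(F (w σ (m+1)) - F (w σ j))
        ≤ ‖w σ (m+1) - w σ j‖^2 * c m + L₀^2*D*(η m) := by
    intro σ
    set s := ‖w σ (m+1) - w σ j‖ with hs
    have hs0 : 0 ≤ s := norm_nonneg _
    have hFle : F (w σ (m+1)) - F (w σ j) ≤ L₀ * s := by
      rw [hF]
      simp only
      rw [← mul_sub, ← Finset.sum_sub_distrib]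
      have hterm : ∀ i : Fin n, f i (w σ (m+1)) - f i (w σ j) ≤ L₀ * s := by
        intro i
        have h4 := subgrad (hconv i) (hgrad i (w σ (m+1))) (w σ j)
        have hCS := real_inner_le_norm (g i (w σ (m+1))) (w σ (m+1) - w σ j)
        have hgb := hL₀ i (w σ (m+1)) (hmemW σ (m+1) le_rfl)
        have hh : ⟪g i (w σ (m+1)), w σ j - w σ (m+1)⟫
            = -⟪g i (w σ (m+1)), w σ (m+1) - w σ j⟫ := by
          rw [show w σ j - w σ (m+1) = -(w σ (m+1) - w σ j) by abel, inner_neg_right]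
        rw [hh] at h4
        have hns : ‖w σ (m+1) - w σ j‖ = s := rfl
        rw [hns] at hCS
        nlinarith [mul_le_mul_of_nonneg_right hgb hs0,
          norm_nonneg (g i (w σ (m+1)))]
      have hsum := Finset.sum_le_sum (s := (Finset.univ : Finset (Fin n))) (fun i _ => hterm i)
      rw [Finset.sum_const, Finset.card_univ, Fintype.card_fin, nsmul_eq_mul] at hsum
      have hninv : (0:ℝ) ≤ (n:ℝ)⁻¹ := by positivity
      calc (n:ℝ)⁻¹ * ∑ i : Fin n, (f i (w σ (m+1)) - f i (w σ j))
          ≤ (n:ℝ)⁻¹ * ((n:ℝ) * (L₀ * s)) := mul_le_mul_of_nonneg_left hsum hninv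
        _ = L₀ * s := by
            rw [← mul_assoc, inv_mul_cancel₀ (Nat.cast_ne_zero.mpr (by omega)), one_mul]
    have hck := hcpos m
    have am : 2*D*(L₀*s) ≤ s^2*(c m) + L₀^2*D*(η m) := by
      rw [← mul_le_mul_iff_of_pos_right hck]
      have e2 : (L₀^2*D*(η m))*c m = L₀^2*D^2 := by
        rw [show (L₀^2*D*(η m))*c m = L₀^2*D*((η m)*c m) by ring, hηck]
        ring
      nlinarith [sq_nonneg (s*(c m) - L₀*D)]
    nlinarith [mul_le_mul_of_nonneg_left hFle (by linarith : (0:ℝ) ≤ 2*D)]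
  -- scalar bound on the deterministic RHS
  set R := D * (L₁ ^ 2 + 2 * L₀ ^ 2) * (Real.sqrt ((m:ℝ) + 1 + 1) - Real.sqrt j) / (2 * L₁)
    with hRdef
  have hscal : D^2*(c m - c j) + L₀^2*D*((∑ k ∈ Finset.Ico j (m+1), η k) + η m)
      ≤ 2*D*R := by
    have hq0 : Real.sqrt j ≤ Real.sqrt ((m:ℝ) + 1 + 1) := Real.sqrt_le_sqrt (by
      have : (j:ℝ) ≤ (m:ℝ) := by exact_mod_cast hjm
      linarith)
    have hc1 : c m - c j ≤ L₁ * (Real.sqrt ((m:ℝ)+1+1) - Real.sqrt j) := by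
      have e1 : Real.sqrt ((m:ℝ)+1) ≤ Real.sqrt ((m:ℝ)+1+1) := Real.sqrt_le_sqrt (by linarith)
      have e2 : Real.sqrt (j:ℝ) ≤ Real.sqrt ((j:ℝ)+1) := Real.sqrt_le_sqrt (by linarith)
      rw [hcdef]
      simp only
      nlinarith [hL₁]
    have hηsum : (∑ k ∈ Finset.Ico j (m+1), η k) + η m
        ≤ (D/L₁) * (2*(Real.sqrt ((m:ℝ)+1+1) - Real.sqrt j)) := by
      have hrw : ∀ k : ℕ, η k = (D/L₁) * (Real.sqrt ((k:ℝ)+1))⁻¹ := by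
        intro k
        rw [hη k, ← div_div, div_eq_mul_inv (D/L₁)]
      have hsum1 : ∑ k ∈ Finset.Ico j (m+1), η k
          = (D/L₁) * ∑ k ∈ Finset.Ico j (m+1), (Real.sqrt ((k:ℝ)+1))⁻¹ := by
        rw [Finset.mul_sum]
        exact Finset.sum_congr rfl fun k _ => hrw k
      have hsplit : ∑ k ∈ Finset.Ico j (m+1), (Real.sqrt ((k:ℝ)+1))⁻¹
          = (∑ k ∈ Finset.Ico j m, (Real.sqrt ((k:ℝ)+1))⁻¹) + (Real.sqrt ((m:ℝ)+1))⁻¹ :=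
        Finset.sum_Ico_succ_top hjm _
      have hb1 := sum_inv_sqrt j m hjm
      have hb2 := sqrt_aux2 m
      have hb3 : (0:ℝ) < D/L₁ := by positivity
      have hmain : (∑ k ∈ Finset.Ico j (m+1), (Real.sqrt ((k:ℝ)+1))⁻¹)
            + (Real.sqrt ((m:ℝ)+1))⁻¹
          ≤ 2*(Real.sqrt ((m:ℝ)+1+1) - Real.sqrt j) := by
        rw [hsplit, show ((m:ℝ)+1+1) = ((m:ℝ)+2) by ring]
        linarith
      rw [hsum1, hrw m, ← mul_add]
      exact mul_le_mul_of_nonneg_left hmain hb3.le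
    have hL₁ne : L₁ ≠ 0 := ne_of_gt hL₁
    have h2DR : 2*D*R = D^2*(L₁^2 + 2*L₀^2)*(Real.sqrt ((m:ℝ)+1+1) - Real.sqrt j)/L₁ := by
      rw [hRdef]; field_simp
    rw [h2DR]
    have hD2 : (0:ℝ) < D^2 := by positivity
    have hstep1 : D^2*(c m - c j) ≤ D^2*L₁*(Real.sqrt ((m:ℝ)+1+1) - Real.sqrt j) := by
      nlinarith [hc1]
    have hstep2 : L₀^2*D*((∑ k ∈ Finset.Ico j (m+1), η k) + η m)
        ≤ L₀^2*D*((D/L₁) * (2*(Real.sqrt ((m:ℝ)+1+1) - Real.sqrt j))) := by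
      apply mul_le_mul_of_nonneg_left hηsum (by positivity)
    have hid : D^2*L₁*(Real.sqrt ((m:ℝ)+1+1) - Real.sqrt j)
          + L₀^2*D*((D/L₁) * (2*(Real.sqrt ((m:ℝ)+1+1) - Real.sqrt j)))
        = D^2*(L₁^2 + 2*L₀^2)*(Real.sqrt ((m:ℝ)+1+1) - Real.sqrt j)/L₁ := by
      field_simp
    linarith
  -- per-sequence bound
  have perσ : ∀ σ : Fin (m+1) → Fin n,
      (∑ k ∈ Finset.Ico j (m+1), Φ σ k) + (F (w σ (m+1)) - F (w σ j)) ≤ R := by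
    intro σ
    have hQ := Qind σ m hjm (by omega)
    have hT := tstep σ
    have h2D : (0:ℝ) < 2*D := by linarith
    have : 2*D*((∑ k ∈ Finset.Ico j (m+1), Φ σ k) + (F (w σ (m+1)) - F (w σ j))) ≤ 2*D*R := by
      nlinarith [hQ, hT, hscal]
    exact le_of_mul_le_mul_left (by linarith [this]) h2D
  -- exchange step
  have hexch : ∀ k, j ≤ k → ∀ (hk1 : k < m + 1),
      ∑ σ : Fin (m+1) → Fin n, (F (w σ k) - F (w σ j))
        = ∑ σ : Fin (m+1) → Fin n, Φ σ k := by
    intro k hkj hk1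
    set κ : Fin (m+1) := ⟨k, hk1⟩ with hκ
    have h1 : ∑ σ : Fin (m+1) → Fin n, f (σ κ) (w σ k)
        = (n:ℝ)⁻¹ * ∑ σ : Fin (m+1) → Fin n, ∑ i, f i (w σ k) := by
      apply exchange hn
      intro σ σ' hag
      have hκv : (κ : ℕ) = k := rfl
      exact hdep' σ σ' k (by omega) (fun i hi => hag i (Fin.ne_of_val_ne (by omega)))
    have h2 : ∑ σ : Fin (m+1) → Fin n, f (σ κ) (w σ j)
        = (n:ℝ)⁻¹ * ∑ σ : Fin (m+1) → Fin n, ∑ i, f i (w σ j) := by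
      apply exchange hn
      intro σ σ' hag
      have hκv : (κ : ℕ) = k := rfl
      exact hdep' σ σ' j (by omega) (fun i hi => hag i (Fin.ne_of_val_ne (by omega)))
    have hΦk : ∀ σ : Fin (m+1) → Fin n, Φ σ k = f (σ κ) (w σ k) - f (σ κ) (w σ j) := by
      intro σ; rw [hΦdef]; simp only [dif_pos hk1]; rfl
    calc ∑ σ : Fin (m+1) → Fin n, (F (w σ k) - F (w σ j))
        = (∑ σ : Fin (m+1) → Fin n, (n:ℝ)⁻¹ * ∑ i, f i (w σ k))
          - ∑ σ : Fin (m+1) → Fin n, (n:ℝ)⁻¹ * ∑ i, f i (w σ j) := by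
          rw [← Finset.sum_sub_distrib]
          exact Finset.sum_congr rfl fun σ _ => by rw [hF]
      _ = ((n:ℝ)⁻¹ * ∑ σ : Fin (m+1) → Fin n, ∑ i, f i (w σ k))
          - (n:ℝ)⁻¹ * ∑ σ : Fin (m+1) → Fin n, ∑ i, f i (w σ j) := by
          rw [Finset.mul_sum, Finset.mul_sum]
      _ = (∑ σ : Fin (m+1) → Fin n, f (σ κ) (w σ k))
          - ∑ σ : Fin (m+1) → Fin n, f (σ κ) (w σ j) := by rw [h1, h2]
      _ = ∑ σ : Fin (m+1) → Fin n, Φ σ k := by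
          rw [← Finset.sum_sub_distrib]
          exact Finset.sum_congr rfl fun σ _ => (hΦk σ).symm
  -- assemble
  have hsum_rw : ∀ σ : Fin (m+1) → Fin n,
      ∑ k ∈ Finset.Icc j (m+1), (F (w σ k) - F (w σ j))
        = (∑ k ∈ Finset.Ico j (m+1), (F (w σ k) - F (w σ j)))
          + (F (w σ (m+1)) - F (w σ j)) := by
    intro σ
    rw [← Finset.Ico_add_one_right_eq_Icc, Finset.sum_Ico_succ_top (by omega)]
  have htotal : ∑ σ : Fin (m+1) → Fin n, ∑ k ∈ Finset.Icc j (m+1), (F (w σ k) - F (w σ j))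
      = ∑ σ : Fin (m+1) → Fin n,
          ((∑ k ∈ Finset.Ico j (m+1), Φ σ k) + (F (w σ (m+1)) - F (w σ j))) := by
    rw [Finset.sum_congr rfl fun σ _ => hsum_rw σ, Finset.sum_add_distrib,
      Finset.sum_add_distrib]
    congr 1
    rw [Finset.sum_comm, Finset.sum_comm
      (s := (Finset.univ : Finset (Fin (m+1) → Fin n)))]
    refine Finset.sum_congr rfl fun k hk => ?_
    have hk' := Finset.mem_Ico.mp hk
    exact hexch k hk'.1 hk'.2
  have hcard : (Finset.univ : Finset (Fin (m+1) → Fin n)).card = n^(m+1) := by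
    rw [Finset.card_univ]
    simp [Fintype.card_fun]
  have hnpow : (0:ℝ) < (n:ℝ)^(m+1) := by positivity
  have hfinal : ((n:ℝ) ^ (m+1))⁻¹ *
      ∑ σ : Fin (m+1) → Fin n, ∑ k ∈ Finset.Icc j (m+1), (F (w σ k) - F (w σ j)) ≤ R := by
    rw [htotal]
    have hb := Finset.sum_le_sum (s := (Finset.univ : Finset (Fin (m+1) → Fin n))) (fun σ _ => perσ σ)
    rw [Finset.sum_const, hcard, nsmul_eq_mul] at hb
    calc ((n:ℝ) ^ (m+1))⁻¹ * ∑ σ : Fin (m+1) → Fin n,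
          ((∑ k ∈ Finset.Ico j (m+1), Φ σ k) + (F (w σ (m+1)) - F (w σ j)))
        ≤ ((n:ℝ) ^ (m+1))⁻¹ * ((n^(m+1) : ℕ) * R) :=
          mul_le_mul_of_nonneg_left hb (by positivity)
      _ = R := by
          rw [Nat.cast_pow, ← mul_assoc, inv_mul_cancel₀ (ne_of_gt hnpow), one_mul]
  calc ((n:ℝ) ^ (m+1))⁻¹ *
      ∑ σ : Fin (m+1) → Fin n, ∑ k ∈ Finset.Icc j (m+1), (F (w σ k) - F (w σ j)) ≤ R := hfinal
    _ = D * (L₁ ^ 2 + 2 * L₀ ^ 2) * (Real.sqrt (↑(m+1) + 1) - Real.sqrt j) / (2 * L₁) := by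
        rw [hRdef]
        norm_num
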